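/- Let p ∈ \overline{ℚ}[X] be a polynomial with at most t+1 nonzero terms (t ≥ 1). Assume p = q + r where every monomial of q has degree at most β and every monomial of r has degree at least γ. Let x be a nonzero algebraic number that is a root of p and is not a root of unity. If γ − β > log(t · H(p)) / log H(x), then q(x) = 0 and r(x) = 0. -/

import Mathlib

open Polynomial NumberField

/-- The absolute projective (Weil) height of a tuple `c` of elements of a number field `K`:
`H(c) = (∏_{ν ∈ M_K} (max_j |c_j|_ν)^{d_ν})^{1/[K:ℚ]}`.
The contribution of the archimedean places is `∏_{σ : K →+* ℂ} max_j |σ(c_j)|` (each complex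
place being counted with its local degree), and the contribution of all the finite places is the
inverse of the absolute norm of the fractional ideal generated by the `c_j`. -/
noncomputable def projHeight (K : Type*) [Field K] [NumberField K] {ι : Type*} [Fintype ι]
    (c : ι → K) : ℝ :=
  ((∏ σ : K →+* ℂ, ⨆ j, ‖σ (c j)‖) /
      |(FractionalIdeal.absNorm
          (FractionalIdeal.spanFinset (𝓞 K) Finset.univ c) : ℚ)|) ^
    ((Module.finrank ℚ K : ℝ)⁻¹)

/-- The absolute Weil height of an element `x` of a number field `K`:
`H(x) = ∏_{ν ∈ M_K} max(1, |x|_ν)^{d_ν/[K:ℚ]}`, i.e. the projective height of `(1, x)`. -/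
noncomputable def elemHeight (K : Type*) [Field K] [NumberField K] (x : K) : ℝ :=
  projHeight K ![1, x]

/-- The height of a polynomial with algebraic coefficients, not all zero, is the projective
height of its coefficient tuple. -/
noncomputable def polyHeight (K : Type*) [Field K] [NumberField K] (f : K[X]) : ℝ :=
  projHeight K fun j : Fin (f.natDegree + 1) => f.coeff j

open FractionalIdeal nonZeroDivisors

section Aux
variable {K : Type*} [Field K] [NumberField K]


lemma prod_abs_emb (y : K) :
    ∏ σ : K →+* ℂ, ‖σ y‖ = |((Algebra.norm ℚ y : ℚ) : ℝ)| := by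
  have h := Algebra.norm_eq_prod_embeddings ℚ ℂ y
  have h2 : ∏ σ : K →+* ℂ, ‖σ y‖ = ∏ σ : K →ₐ[ℚ] ℂ, ‖σ y‖ :=
    Fintype.prod_equiv (RingHom.equivRatAlgHom K ℂ) _ _ (fun σ => rfl)
  rw [h2, ← norm_prod, ← h]
  have : (algebraMap ℚ ℂ) (Algebra.norm ℚ y) = ((Algebra.norm ℚ y : ℚ) : ℂ) := rfl
  rw [this]
  rw [← Real.norm_eq_abs, ← Complex.norm_real]
  norm_cast
  rw [← Rat.norm_cast_real, Real.norm_eq_abs, Rat.cast_abs]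

lemma iSup_fin2 (f : Fin 2 → ℝ) : (⨆ j, f j) = max (f 0) (f 1) := by
  refine le_antisymm (ciSup_le fun j => ?_) (max_le ?_ ?_)
  · fin_cases j
    · exact le_max_left _ _
    · exact le_max_right _ _
  · exact le_ciSup (Set.Finite.bddAbove (Set.finite_range f)) 0
  · exact le_ciSup (Set.Finite.bddAbove (Set.finite_range f)) 1

lemma absNorm_anti {I J : FractionalIdeal (𝓞 K)⁰ K} (hI : I ≠ 0) (h : I ≤ J) :
    absNorm J ≤ absNorm I := by
  have hJ : J ≠ 0 := by
    rintro rfl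
    exact hI (le_antisymm h (zero_le I))
  have hmul : I * J⁻¹ ≤ 1 := by
    have h2 : I * J⁻¹ ≤ J * J⁻¹ := mul_left_mono (a := J⁻¹) h
    rwa [mul_inv_cancel₀ hJ] at h2
  obtain ⟨I₀, hI₀⟩ := le_one_iff_exists_coeIdeal.mp hmul
  have hne : I * J⁻¹ ≠ 0 := mul_ne_zero hI (inv_ne_zero hJ)
  have h1 : 1 ≤ absNorm (I * J⁻¹) := by
    rw [← hI₀, coeIdeal_absNorm]
    have hI₀ne : I₀ ≠ 0 := by
      rintro rfl
      rw [← hI₀] at hne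
      simp at hne
    have := Ideal.absNorm_eq_zero_iff (I := I₀)
    exact_mod_cast Nat.one_le_iff_ne_zero.mpr (fun hh => hI₀ne (this.mp hh))
  calc absNorm J = 1 * absNorm J := (one_mul _).symm
    _ ≤ absNorm (I * J⁻¹) * absNorm J :=
        mul_le_mul_of_nonneg_right h1 (absNorm_nonneg J)
    _ = absNorm (I * J⁻¹ * J) := (_root_.map_mul absNorm _ _).symm
    _ = absNorm I := by rw [mul_assoc, mul_comm J⁻¹ J, mul_inv_cancel₀ hJ, mul_one]


lemma pow_span_pair (x : K) : ∀ n : ℕ,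
    (Submodule.span (𝓞 K) ({1, x} : Set K)) ^ n
      = Submodule.span (𝓞 K) ((fun k : ℕ => x ^ k) '' Set.Iic n) := by
  intro n
  induction n with
  | zero =>
    rw [pow_zero]
    have : ((fun k : ℕ => x ^ k) '' Set.Iic 0) = {1} := by
      ext w; simp [Set.Iic, Nat.le_zero]
    rw [this, ← Submodule.one_eq_span]
  | succ n ih =>
    rw [pow_succ, ih, Submodule.span_mul_span]
    apply le_antisymm
    · rw [Submodule.span_le]
      rintro w ⟨a, ⟨k, hk, rfl⟩, b, hb, rfl⟩
      rcases hb with rfl | rfl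
      · exact Submodule.subset_span ⟨k, le_trans hk (Nat.le_succ n), by simp⟩
      · exact Submodule.subset_span ⟨k + 1, Nat.succ_le_succ hk, by simp [pow_succ]⟩
    · rw [Submodule.span_le]
      rintro w ⟨k, hk, rfl⟩
      rcases Nat.lt_or_ge k (n+1) with h | h
      · exact Submodule.subset_span
          ⟨x ^ k, ⟨k, Nat.lt_succ_iff.mp h, rfl⟩, 1, Or.inl rfl, (mul_one _)⟩
      · have hk' : k = n + 1 := le_antisymm hk h
        subst hk'
        exact Submodule.subset_span ⟨x ^ n, ⟨n, le_refl n, rfl⟩, x, Or.inr rfl, (pow_succ x n).symm⟩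

lemma mem_one_of_mem_spans {x z : K} (hx : x ≠ 0) {d c : ℕ}
    (h1 : z ∈ Submodule.span (𝓞 K) ((fun k : ℕ => x⁻¹ ^ k) '' Set.Iic c))
    (h2 : z ∈ Submodule.span (𝓞 K) ((fun k : ℕ => x ^ k) '' Set.Iic d)) :
    z ∈ (1 : FractionalIdeal (𝓞 K)⁰ K) := by
  rw [FractionalIdeal.mem_one_iff]
  refine IsIntegrallyClosed.isIntegral_iff.mp ?_
  set N : Submodule (𝓞 K) K :=
    Submodule.span (𝓞 K) ((fun j : ℤ => x ^ j) '' Set.Icc (-(c:ℤ)) (d:ℤ)) with hN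
  have hmemN : ∀ j : ℤ, -(c:ℤ) ≤ j → j ≤ d → x ^ j ∈ N :=
    fun j h1 h2 => Submodule.subset_span ⟨j, ⟨h1, h2⟩, rfl⟩
  refine isIntegral_of_smul_mem_submodule N ?_ ?_ z ?_
  · intro hbot
    have h1N : (1 : K) ∈ N := by
      have := hmemN 0 (by simp) (by simp)
      simpa using this
    rw [hbot] at h1N
    simpa using h1N
  · exact Submodule.fg_span (Set.Finite.image _ (Set.finite_Icc _ _))
  · intro n hn
    have key : ∀ j : ℤ, -(c:ℤ) ≤ j → j ≤ d → z * x ^ j ∈ N := by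
      intro j hj1 hj2
      rcases le_or_gt 0 j with hj0 | hj0
      · -- use h1 : z in span of inverse powers
        refine Submodule.span_induction ?_ ?_ ?_ ?_ h1
        · rintro w ⟨k, hk, rfl⟩
          rw [Set.mem_Iic] at hk
          have : x⁻¹ ^ k * x ^ j = x ^ (j - (k : ℤ)) := by
            rw [inv_pow, ← zpow_natCast x k, ← zpow_neg, ← zpow_add₀ hx]
            congr 1
            omega
          rw [this]
          exact hmemN _ (by omega) (by omega)
        · simp
        · intro a b _ _ ha hb
          rw [add_mul]; exact N.add_mem ha hb
        · intro a w _ hw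
          rw [Algebra.smul_def, mul_assoc, ← Algebra.smul_def]
          exact N.smul_mem a hw
      · refine Submodule.span_induction ?_ ?_ ?_ ?_ h2
        · rintro w ⟨k, hk, rfl⟩
          rw [Set.mem_Iic] at hk
          have : x ^ k * x ^ j = x ^ ((k : ℤ) + j) := by
            rw [← zpow_natCast x k, ← zpow_add₀ hx]
          rw [this]
          exact hmemN _ (by omega) (by omega)
        · simp
        · intro a b _ _ ha hb
          rw [add_mul]; exact N.add_mem ha hb
        · intro a w _ hw
          rw [Algebra.smul_def, mul_assoc, ← Algebra.smul_def]
          exact N.smul_mem a hw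
    -- now n ∈ N, show z • n ∈ N
    refine Submodule.span_induction ?_ ?_ ?_ ?_ hn
    · rintro w ⟨j, ⟨hj1, hj2⟩, rfl⟩
      simpa [smul_eq_mul] using key j hj1 hj2
    · simp
    · intro a b _ _ ha hb
      rw [smul_add]; exact N.add_mem ha hb
    · intro a w _ hw
      rw [smul_comm]
      exact N.smul_mem a hw

lemma mem_of_mem_mul_int {C T₁ T₂ : FractionalIdeal (𝓞 K)⁰ K} (hC : C ≠ 0) {z : K}
    (h1 : z ∈ C * T₁) (h2 : z ∈ C * T₂)
    (hT : ∀ w : K, w ∈ T₁ → w ∈ T₂ → w ∈ (1 : FractionalIdeal (𝓞 K)⁰ K)) : z ∈ C := by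
  have hzle : ∀ T : FractionalIdeal (𝓞 K)⁰ K, z ∈ C * T →
      spanSingleton (𝓞 K)⁰ z * C⁻¹ ≤ T := by
    intro T hzT
    have h3 : spanSingleton (𝓞 K)⁰ z ≤ C * T := by
      rwa [spanSingleton_le_iff_mem]
    have h4 : spanSingleton (𝓞 K)⁰ z * C⁻¹ ≤ C * T * C⁻¹ := mul_left_mono (a := C⁻¹) h3
    rwa [mul_comm C T, mul_assoc, mul_inv_cancel₀ hC, mul_one] at h4
  have hle1 : spanSingleton (𝓞 K)⁰ z * C⁻¹ ≤ 1 := by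
    intro w hw
    exact hT w (hzle T₁ h1 hw) (hzle T₂ h2 hw)
  have : spanSingleton (𝓞 K)⁰ z ≤ C := by
    have h5 : spanSingleton (𝓞 K)⁰ z * C⁻¹ * C ≤ 1 * C := mul_left_mono (a := C) hle1
    rwa [mul_assoc, mul_comm C⁻¹ C, mul_inv_cancel₀ hC, mul_one, one_mul] at h5
  rwa [spanSingleton_le_iff_mem] at this


lemma mem_spanFinset_univ {ι : Type*} [Fintype ι] (c : ι → K) (j : ι) :
    c j ∈ spanFinset (𝓞 K) Finset.univ c := by
  rw [← FractionalIdeal.mem_coe, spanFinset_coe]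
  exact Submodule.subset_span ⟨j, Finset.mem_coe.mpr (Finset.mem_univ j), rfl⟩

lemma kronecker (x : K) (hx0 : x ≠ 0) (hxru : ∀ n : ℕ, 0 < n → x ^ n ≠ 1) :
    1 < (∏ σ : K →+* ℂ, max 1 (‖σ x‖)) /
      ((absNorm (spanFinset (𝓞 K) Finset.univ ![1, x]) : ℚ) : ℝ) := by
  classical
  set A := spanFinset (𝓞 K) Finset.univ ![1, x] with hA
  have h1memA : (1 : K) ∈ A := by simpa using mem_spanFinset_univ ![1, x] 0
  have h1A : (1 : FractionalIdeal (𝓞 K)⁰ K) ≤ A := by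
    intro z hz
    obtain ⟨z', hz'⟩ := (mem_one_iff _).mp hz
    rw [← hz', ← mul_one ((algebraMap (𝓞 K) K) z'), ← Algebra.smul_def (A := K) z' 1]
    exact Submodule.smul_mem _ z' (FractionalIdeal.mem_coe.mpr h1memA)
  have hone : (1 : FractionalIdeal (𝓞 K)⁰ K) ≠ 0 := by
    intro h
    have h1 := absNorm_one (R := 𝓞 K) (K := K)
    rw [h, _root_.map_zero] at h1
    norm_num at h1
  have hAne : A ≠ 0 := fun h0 => hone (le_antisymm (h0 ▸ h1A) (zero_le _))
  have hNA1 : absNorm A ≤ 1 := by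
    have := absNorm_anti hone h1A
    rwa [absNorm_one] at this
  have hNA0 : 0 < absNorm A :=
    lt_of_le_of_ne (absNorm_nonneg A) (fun h => hAne (absNorm_eq_zero_iff.mp h.symm))
  have hP1 : 1 ≤ ∏ σ : K →+* ℂ, max 1 (‖σ x‖) := by
    have := Finset.prod_le_prod (s := (Finset.univ : Finset (K →+* ℂ)))
      (f := fun _ => (1:ℝ)) (g := fun σ => max 1 (‖σ x‖))
      (fun i _ => zero_le_one) (fun i _ => le_max_left _ _)
    simpa using this
  have hNAr : ((absNorm A : ℚ) : ℝ) ≤ 1 := by exact_mod_cast hNA1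
  have hNAr0 : (0:ℝ) < ((absNorm A : ℚ) : ℝ) := by exact_mod_cast hNA0
  have hge : 1 ≤ (∏ σ : K →+* ℂ, max 1 (‖σ x‖)) / ((absNorm A : ℚ) : ℝ) :=
    (one_le_div hNAr0).mpr (le_trans hNAr hP1)
  rcases lt_or_eq_of_le hge with h | heq
  · exact h
  exfalso
  -- equality case: P = NA = 1
  have hP : (∏ σ : K →+* ℂ, max 1 (‖σ x‖)) = ((absNorm A : ℚ) : ℝ) :=
    (div_eq_one_iff_eq (ne_of_gt hNAr0)).mp heq.symm
  have hPeq1 : (∏ σ : K →+* ℂ, max 1 (‖σ x‖)) = 1 :=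
    le_antisymm (hP ▸ hNAr) hP1
  have hNAeq1 : absNorm A = 1 := by
    have : ((absNorm A : ℚ) : ℝ) = 1 := by rw [← hP, hPeq1]
    exact_mod_cast this
  -- A = 1, so x is integral
  have hAeq1 : A = 1 := by
    have hinvle : A⁻¹ ≤ 1 := by
      have h2 : A⁻¹ * 1 ≤ A⁻¹ * A := mul_right_mono (a := A⁻¹) h1A
      rwa [mul_one, mul_comm, mul_inv_cancel₀ hAne] at h2
    obtain ⟨I₀, hI₀⟩ := le_one_iff_exists_coeIdeal.mp hinvle
    have hNinv : absNorm A⁻¹ = 1 := by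
      rw [map_inv₀, hNAeq1, inv_one]
    have : Ideal.absNorm I₀ = 1 := by
      have := hNinv
      rw [← hI₀, coeIdeal_absNorm] at this
      exact_mod_cast this
    have hI₀top : I₀ = ⊤ := Ideal.absNorm_eq_one_iff.mp this
    have hAinv1 : A⁻¹ = 1 := by
      rw [← hI₀, hI₀top]
      simp
    have := mul_inv_cancel₀ hAne
    rw [hAinv1, mul_one] at this
    exact this
  have hxmem : x ∈ (1 : FractionalIdeal (𝓞 K)⁰ K) := by
    rw [← hAeq1]
    have := mem_spanFinset_univ ![1, x] 1
    simpa using this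
  obtain ⟨x₀, hx₀⟩ := (mem_one_iff _).mp hxmem
  have hxint : IsIntegral ℤ x := by
    rw [← hx₀]
    exact RingOfIntegers.isIntegral_coe x₀
  -- all |σ x| ≤ 1
  have hle1 : ∀ σ : K →+* ℂ, ‖σ x‖ ≤ 1 := by
    intro σ
    have hsplit : ∏ τ : K →+* ℂ, max 1 (‖τ x‖)
        = max 1 (‖σ x‖) * ∏ τ ∈ Finset.univ.erase σ, max 1 (‖τ x‖) :=
      (Finset.mul_prod_erase Finset.univ _ (Finset.mem_univ σ)).symm
    have hrest : 1 ≤ ∏ τ ∈ Finset.univ.erase σ, max 1 (‖τ x‖) := by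
      have := Finset.prod_le_prod (s := Finset.univ.erase σ)
        (f := fun _ => (1:ℝ)) (g := fun τ => max 1 (‖τ x‖))
        (fun i _ => zero_le_one) (fun i _ => le_max_left _ _)
      simpa using this
    have hmax1 : max 1 (‖σ x‖) ≤ 1 := by
      calc max 1 (‖σ x‖)
          ≤ max 1 (‖σ x‖) * ∏ τ ∈ Finset.univ.erase σ, max 1 (‖τ x‖) :=
            le_mul_of_one_le_right (le_trans zero_le_one (le_max_left _ _)) hrest
        _ = 1 := by rw [← hsplit, hPeq1]
    exact le_trans (le_max_right _ _) hmax1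
  -- |Norm x| ≥ 1
  have hNx1 : 1 ≤ ∏ σ : K →+* ℂ, ‖σ x‖ := by
    rw [prod_abs_emb]
    have hssle : spanSingleton (𝓞 K)⁰ x ≤ 1 := spanSingleton_le_iff_mem.mpr hxmem
    have hssne : spanSingleton (𝓞 K)⁰ x ≠ 0 := spanSingleton_ne_zero_iff.mpr hx0
    have h1 : absNorm (1 : FractionalIdeal (𝓞 K)⁰ K) ≤ absNorm (spanSingleton (𝓞 K)⁰ x) :=
      absNorm_anti hssne hssle
    rw [absNorm_one, absNorm_span_singleton] at h1
    calc (1:ℝ) = ((1:ℚ):ℝ) := by norm_num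
      _ ≤ ((|Algebra.norm ℚ x| : ℚ) : ℝ) := by exact_mod_cast h1
      _ = |((Algebra.norm ℚ x : ℚ) : ℝ)| := Rat.cast_abs _
  -- each |σ x| = 1
  have heq1 : ∀ σ : K →+* ℂ, ‖σ x‖ = 1 := by
    intro σ
    refine le_antisymm (hle1 σ) ?_
    have hsplit : ∏ τ : K →+* ℂ, ‖τ x‖
        = ‖σ x‖ * ∏ τ ∈ Finset.univ.erase σ, ‖τ x‖ :=
      (Finset.mul_prod_erase Finset.univ _ (Finset.mem_univ σ)).symm
    have hrest : ∏ τ ∈ Finset.univ.erase σ, ‖τ x‖ ≤ 1 :=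
      Finset.prod_le_one (fun τ _ => norm_nonneg _) (fun τ _ => hle1 τ)
    calc (1:ℝ) ≤ ∏ τ : K →+* ℂ, ‖τ x‖ := hNx1
      _ = ‖σ x‖ * ∏ τ ∈ Finset.univ.erase σ, ‖τ x‖ := hsplit
      _ ≤ ‖σ x‖ * 1 :=
          mul_le_mul_of_nonneg_left hrest (norm_nonneg _)
      _ = ‖σ x‖ := mul_one _
  obtain ⟨n, hn, hxn⟩ := NumberField.Embeddings.pow_eq_one_of_norm_eq_one K ℂ hxint
    (fun φ => by exact heq1 φ)
  exact hxru n hn hxn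

lemma pow_mul_pow_inv {K : Type*} [Field K] {x : K} (hx : x ≠ 0) {i s : ℕ} (h : i ≤ s) :
    x ^ i * (x ^ s)⁻¹ = x⁻¹ ^ (s - i) := by
  have h1 : x ^ (s - i) * x ^ i = x ^ s := by rw [← pow_add]; congr 1; omega
  rw [← h1, inv_pow, mul_inv, mul_comm ((x ^ (s - i))⁻¹), ← mul_assoc,
    mul_inv_cancel₀ (pow_ne_zero _ hx), one_mul]

end Aux

/-- Let `p ∈ ℚ̄[X]` (realized in a number field `K`) have at most `t+1` nonzero terms, `t ≥ 1`.
Assume `p = q + r` where every monomial of `q` has degree at most `β` and every monomial of `r`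
has degree at least `γ`. Let `x ≠ 0` be a root of `p` that is not a root of unity.
If `γ − β > log(t · H(p)) / log H(x)` then `q(x) = 0` and `r(x) = 0`. -/
theorem stmt5 (K : Type*) [Field K] [NumberField K] (t β γ : ℕ) (ht : 1 ≤ t)
    (p q r : K[X]) (hpqr : p = q + r)
    (hterms : p.support.card ≤ t + 1)
    (hq : ∀ i ∈ q.support, i ≤ β)
    (hr : ∀ i ∈ r.support, γ ≤ i)
    (x : K) (hx0 : x ≠ 0) (hxroot : p.eval x = 0)
    (hxru : ∀ n : ℕ, 0 < n → x ^ n ≠ 1)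
    (hgap : Real.log (t * polyHeight K p) / Real.log (elemHeight K x) < (γ : ℝ) - (β : ℝ)) :
    q.eval x = 0 ∧ r.eval x = 0 := by
  classical
  have hD : 0 < Module.finrank ℚ K := Module.finrank_pos
  set D := Module.finrank ℚ K with hDdef
  have hcard : Fintype.card (K →+* ℂ) = D := NumberField.Embeddings.card K ℂ
  -- basic archimedean/finite data for x
  set PA : ℝ := ∏ σ : K →+* ℂ, max 1 (‖σ x‖) with hPAdef
  set A : FractionalIdeal (𝓞 K)⁰ K := spanFinset (𝓞 K) Finset.univ ![1, x] with hAdef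
  set NAr : ℝ := ((absNorm A : ℚ) : ℝ) with hNArdef
  have hQA1 : 1 < PA / NAr := kronecker x hx0 hxru
  have hAne : A ≠ 0 := by
    rw [hAdef, Ne, spanFinset_eq_zero]
    intro h
    have := h 0 (Finset.mem_univ 0)
    simp at this
  have hNAq0 : 0 < absNorm A :=
    lt_of_le_of_ne (absNorm_nonneg A) (fun h => hAne (absNorm_eq_zero_iff.mp h.symm))
  have hNAr0 : (0:ℝ) < NAr := by rw [hNArdef]; exact_mod_cast hNAq0
  have hQA0 : (0:ℝ) < PA / NAr := lt_trans one_pos hQA1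
  have hPA0 : (0:ℝ) < PA := by
    rcases div_pos_iff.mp hQA0 with ⟨h1, _⟩ | ⟨_, h2⟩
    · exact h1
    · linarith
  have helem : elemHeight K x = (PA / NAr) ^ ((D:ℝ)⁻¹) := by
    unfold elemHeight projHeight
    congr 1
    congr 1
    · apply Finset.prod_congr rfl
      intro σ _
      rw [iSup_fin2 (fun j => ‖σ (![1, x] j)‖)]
      simp
    · rw [abs_of_nonneg (absNorm_nonneg _)]
  have hlogHx : 0 < Real.log (elemHeight K x) := by
    rw [helem, Real.log_rpow hQA0]
    exact mul_pos (by positivity) (Real.log_pos hQA1)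
  -- case p = 0
  by_cases hp0 : p = 0
  · have hpoly0 : polyHeight K p = 0 := by
      unfold polyHeight projHeight
      rw [hp0]
      have h1 : ∀ σ : K →+* ℂ, (⨆ j : Fin ((0:K[X]).natDegree + 1),
          ‖σ ((0:K[X]).coeff j)‖) = 0 := by
        intro σ
        simp [ciSup_const]
      rw [Finset.prod_congr rfl (fun σ _ => h1 σ), Finset.prod_const, zero_pow, zero_div,
        Real.zero_rpow]
      · positivity
      · rw [Finset.card_univ, hcard]; omega
    have hβγ : β < γ := by
      rw [hpoly0, mul_zero, Real.log_zero, zero_div] at hgap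
      have : (β:ℝ) < γ := by linarith
      exact_mod_cast this
    have hq0 : q = 0 := by
      rw [← Polynomial.support_eq_empty, Finset.eq_empty_iff_forall_notMem]
      intro i hi
      have h1 : i ≤ β := hq i hi
      have h2 : i ∈ r.support := by
        have hqr : q = -r := by
          have : q + r = 0 := by rw [← hpqr, hp0]
          linear_combination this
        rw [hqr] at hi
        simpa using hi
      have h3 : γ ≤ i := hr i h2
      omega
    have hr0 : r = 0 := by
      have : q + r = 0 := by rw [← hpqr, hp0]
      rw [hq0, zero_add] at this
      exact this
    rw [hq0, hr0]
    simp
  -- now p ≠ 0 : polynomial height data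
  set PC : ℝ := ∏ σ : K →+* ℂ, ⨆ j : Fin (p.natDegree + 1), ‖σ (p.coeff j)‖ with hPCdef
  set C : FractionalIdeal (𝓞 K)⁰ K :=
    spanFinset (𝓞 K) Finset.univ (fun j : Fin (p.natDegree + 1) => p.coeff j) with hCdef
  set NCr : ℝ := ((absNorm C : ℚ) : ℝ) with hNCrdef
  have hlc : p.coeff p.natDegree ≠ 0 := fun h => hp0 (Polynomial.leadingCoeff_eq_zero.mp h)
  have hCne : C ≠ 0 := by
    rw [hCdef, Ne, spanFinset_eq_zero]
    intro h
    exact hlc (h ⟨p.natDegree, Nat.lt_succ_self _⟩ (Finset.mem_univ _))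
  have hNCq0 : 0 < absNorm C :=
    lt_of_le_of_ne (absNorm_nonneg C) (fun h => hCne (absNorm_eq_zero_iff.mp h.symm))
  have hNCr0 : (0:ℝ) < NCr := by rw [hNCrdef]; exact_mod_cast hNCq0
  have hbdd : ∀ σ : K →+* ℂ, BddAbove (Set.range fun j : Fin (p.natDegree + 1) =>
      ‖σ (p.coeff j)‖) := fun σ => Set.Finite.bddAbove (Set.finite_range _)
  have hPCge : ∀ σ : K →+* ℂ, ∀ i : ℕ, i ≤ p.natDegree →
      ‖σ (p.coeff i)‖ ≤ ⨆ j : Fin (p.natDegree + 1), ‖σ (p.coeff j)‖ := by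
    intro σ i hi
    have := le_ciSup (hbdd σ) ⟨i, Nat.lt_succ_of_le hi⟩
    simpa using this
  have hsupnn : ∀ σ : K →+* ℂ,
      0 ≤ ⨆ j : Fin (p.natDegree + 1), ‖σ (p.coeff j)‖ := by
    intro σ
    exact le_trans (norm_nonneg _) (hPCge σ 0 (Nat.zero_le _))
  -- 1 ≤ PC / NCr
  have hQC1 : 1 ≤ PC / NCr := by
    have h1 : spanSingleton (𝓞 K)⁰ (p.coeff p.natDegree) ≤ C := by
      rw [spanSingleton_le_iff_mem, hCdef]
      have := mem_spanFinset_univ (fun j : Fin (p.natDegree + 1) => p.coeff j)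
        ⟨p.natDegree, Nat.lt_succ_self _⟩
      simpa using this
    have h2 := absNorm_anti (spanSingleton_ne_zero_iff.mpr hlc) h1
    rw [absNorm_span_singleton] at h2
    have h3 : NCr ≤ ∏ σ : K →+* ℂ, ‖σ (p.coeff p.natDegree)‖ := by
      rw [prod_abs_emb, ← Rat.cast_abs]
      rw [hNCrdef]
      exact_mod_cast h2
    have h4 : (∏ σ : K →+* ℂ, ‖σ (p.coeff p.natDegree)‖) ≤ PC := by
      rw [hPCdef]
      exact Finset.prod_le_prod (fun σ _ => norm_nonneg _)
        (fun σ _ => hPCge σ p.natDegree le_rfl)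
    rw [one_le_div hNCr0]
    exact le_trans h3 h4
  have hPC0 : 0 < PC := lt_of_lt_of_le hNCr0 ((one_le_div hNCr0).mp hQC1)
  have hQC0 : 0 < PC / NCr := div_pos hPC0 hNCr0
  have hpoly : polyHeight K p = (PC / NCr) ^ ((D:ℝ)⁻¹) := by
    unfold polyHeight projHeight
    congr 1
    congr 1
    rw [abs_of_nonneg (absNorm_nonneg _)]
  have hHp1 : 1 ≤ polyHeight K p := by
    rw [hpoly]
    calc (1:ℝ) = 1 ^ ((D:ℝ)⁻¹) := (Real.one_rpow _).symm
      _ ≤ (PC / NCr) ^ ((D:ℝ)⁻¹) := Real.rpow_le_rpow zero_le_one hQC1 (by positivity)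
  have htHp1 : 1 ≤ (t:ℝ) * polyHeight K p := by
    have ht1 : (1:ℝ) ≤ t := by exact_mod_cast ht
    nlinarith
  have hβγ : β < γ := by
    have h0 : 0 ≤ Real.log ((t:ℝ) * polyHeight K p) := Real.log_nonneg htHp1
    have h1 : 0 ≤ Real.log ((t:ℝ) * polyHeight K p) / Real.log (elemHeight K x) :=
      div_nonneg h0 hlogHx.le
    have : (β:ℝ) < γ := by linarith
    exact_mod_cast this
  -- the main contradiction argument
  by_cases hq0 : q.eval x = 0
  · refine ⟨hq0, ?_⟩
    rw [hpqr, Polynomial.eval_add, hq0, zero_add] at hxroot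
    exact hxroot
  exfalso
  set y := q.eval x with hydef
  have hy0 : y ≠ 0 := hq0
  have hyr : r.eval x = -y := by
    rw [hpqr, Polynomial.eval_add] at hxroot
    linear_combination hxroot
  have hrne : r ≠ 0 := by
    intro h
    rw [h, Polynomial.eval_zero] at hyr
    exact hy0 (neg_eq_zero.mp hyr.symm)
  have hqne : q ≠ 0 := fun h => hy0 (by rw [hydef, h, Polynomial.eval_zero])
  -- coefficients of q and r are coefficients of p
  have hcoeffq : ∀ i ∈ q.support, p.coeff i = q.coeff i := by
    intro i hi
    have hrz : r.coeff i = 0 := by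
      rw [← Polynomial.notMem_support_iff]
      intro hir
      have := hr i hir
      have := hq i hi
      omega
    rw [hpqr, Polynomial.coeff_add, hrz, add_zero]
  have hcoeffr : ∀ j ∈ r.support, p.coeff j = r.coeff j := by
    intro j hj
    have hqz : q.coeff j = 0 := by
      rw [← Polynomial.notMem_support_iff]
      intro hjq
      have := hq j hjq
      have := hr j hj
      omega
    rw [hpqr, Polynomial.coeff_add, hqz, zero_add]
  have hsubq : q.support ⊆ p.support := by
    intro i hi
    rw [Polynomial.mem_support_iff, hcoeffq i hi]
    exact Polynomial.mem_support_iff.mp hi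
  have hsubr : r.support ⊆ p.support := by
    intro j hj
    rw [Polynomial.mem_support_iff, hcoeffr j hj]
    exact Polynomial.mem_support_iff.mp hj
  have hdisj : Disjoint q.support r.support := by
    rw [Finset.disjoint_left]
    intro i hiq hir
    have := hq i hiq
    have := hr i hir
    omega
  have hunion : q.support ∪ r.support ⊆ p.support := Finset.union_subset hsubq hsubr
  have hcards : q.support.card + r.support.card ≤ t + 1 := by
    have := Finset.card_union_of_disjoint hdisj
    have h2 := Finset.card_le_card hunion
    omega
  have hqcard1 : 1 ≤ q.support.card := by
    rw [Nat.one_le_iff_ne_zero, Ne, Finset.card_eq_zero, Polynomial.support_eq_empty]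
    exact hqne
  have hrcard1 : 1 ≤ r.support.card := by
    rw [Nat.one_le_iff_ne_zero, Ne, Finset.card_eq_zero, Polynomial.support_eq_empty]
    exact hrne
  have hqcard : q.support.card ≤ t := by omega
  have hrcard : r.support.card ≤ t := by omega
  have hdegp : ∀ i ∈ p.support, i ≤ p.natDegree :=
    fun i hi => Polynomial.le_natDegree_of_ne_zero (Polynomial.mem_support_iff.mp hi)
  -- expansions of y
  have hyq : y = ∑ i ∈ q.support, p.coeff i * x ^ i := by
    rw [hydef, Polynomial.eval_eq_sum, Polynomial.sum_def]
    exact Finset.sum_congr rfl (fun i hi => by rw [hcoeffq i hi])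
  have hyrsum : -y = ∑ j ∈ r.support, p.coeff j * x ^ j := by
    rw [← hyr, Polynomial.eval_eq_sum, Polynomial.sum_def]
    exact Finset.sum_congr rfl (fun j hj => by rw [hcoeffr j hj])
  -- archimedean bound
  have harch : ∀ σ : K →+* ℂ, ‖σ y‖ ≤
      (t:ℝ) * (⨆ j : Fin (p.natDegree + 1), ‖σ (p.coeff j)‖) *
        (max 1 (‖σ x‖) ^ β * min 1 (‖σ x‖) ^ γ) := by
    intro σ
    set Pσ := ⨆ j : Fin (p.natDegree + 1), ‖σ (p.coeff j)‖ with hPσ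
    set a := ‖σ x‖ with hadef
    have ha0 : 0 ≤ a := norm_nonneg _
    rcases le_total a 1 with h1 | h1
    · -- use r expansion
      have hmax : max 1 a = 1 := max_eq_left h1
      have hmin : min 1 a = a := min_eq_right h1
      rw [hmax, hmin, one_pow, one_mul]
      have he : σ y = -∑ j ∈ r.support, σ (p.coeff j) * σ x ^ j := by
        have h0 : y = -∑ j ∈ r.support, p.coeff j * x ^ j := by rw [← hyrsum]; ring
        rw [h0, _root_.map_neg, _root_.map_sum]
        congr 1
        exact Finset.sum_congr rfl fun j _ => by rw [_root_.map_mul, _root_.map_pow]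
      rw [he, norm_neg]
      calc ‖∑ j ∈ r.support, σ (p.coeff j) * σ x ^ j‖
          ≤ ∑ j ∈ r.support, ‖σ (p.coeff j) * σ x ^ j‖ :=
            norm_sum_le _ _
        _ ≤ ∑ _j ∈ r.support, Pσ * a ^ γ := by
            apply Finset.sum_le_sum
            intro j hj
            rw [norm_mul, norm_pow]
            have hb1 : ‖σ (p.coeff j)‖ ≤ Pσ :=
              hPCge σ j (hdegp j (hsubr hj))
            have hb2 : a ^ j ≤ a ^ γ := pow_le_pow_of_le_one ha0 h1 (hr j hj)
            exact mul_le_mul hb1 hb2 (pow_nonneg ha0 _) (hsupnn σ)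
        _ = (r.support.card : ℝ) * (Pσ * a ^ γ) := by rw [Finset.sum_const, nsmul_eq_mul]
        _ ≤ (t:ℝ) * (Pσ * a ^ γ) := by
            apply mul_le_mul_of_nonneg_right _ (mul_nonneg (hsupnn σ) (pow_nonneg ha0 _))
            exact_mod_cast hrcard
        _ = (t:ℝ) * Pσ * a ^ γ := by ring
    · -- use q expansion
      have hmax : max 1 a = a := max_eq_right h1
      have hmin : min 1 a = 1 := min_eq_left h1
      rw [hmax, hmin, one_pow, mul_one]
      have he : σ y = ∑ i ∈ q.support, σ (p.coeff i) * σ x ^ i := by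
        rw [hyq, _root_.map_sum]
        exact Finset.sum_congr rfl fun i _ => by rw [_root_.map_mul, _root_.map_pow]
      rw [he]
      calc ‖∑ i ∈ q.support, σ (p.coeff i) * σ x ^ i‖
          ≤ ∑ i ∈ q.support, ‖σ (p.coeff i) * σ x ^ i‖ :=
            norm_sum_le _ _
        _ ≤ ∑ _i ∈ q.support, Pσ * a ^ β := by
            apply Finset.sum_le_sum
            intro i hi
            rw [norm_mul, norm_pow]
            have hb1 : ‖σ (p.coeff i)‖ ≤ Pσ :=
              hPCge σ i (hdegp i (hsubq hi))
            have hb2 : a ^ i ≤ a ^ β := pow_le_pow_right₀ h1 (hq i hi)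
            exact mul_le_mul hb1 hb2 (pow_nonneg ha0 _) (hsupnn σ)
        _ = (q.support.card : ℝ) * (Pσ * a ^ β) := by rw [Finset.sum_const, nsmul_eq_mul]
        _ ≤ (t:ℝ) * (Pσ * a ^ β) := by
            apply mul_le_mul_of_nonneg_right _ (mul_nonneg (hsupnn σ) (pow_nonneg ha0 _))
            exact_mod_cast hqcard
        _ = (t:ℝ) * Pσ * a ^ β := by ring
  -- product of archimedean bounds
  set Pmin : ℝ := ∏ σ : K →+* ℂ, min 1 (‖σ x‖) with hPmindef
  have hPmin0 : 0 < Pmin := by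
    rw [hPmindef]
    apply Finset.prod_pos
    intro σ _
    exact lt_min one_pos (norm_pos_iff.mpr ((_root_.map_ne_zero σ).mpr hx0))
  set Py : ℝ := ∏ σ : K →+* ℂ, ‖σ y‖ with hPydef
  have hPyle : Py ≤ (t:ℝ) ^ D * PC * (PA ^ β * Pmin ^ γ) := by
    have h1 : Py ≤ ∏ σ : K →+* ℂ, ((t:ℝ) *
        (⨆ j : Fin (p.natDegree + 1), ‖σ (p.coeff j)‖) *
        (max 1 (‖σ x‖) ^ β * min 1 (‖σ x‖) ^ γ)) := by
      rw [hPydef]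
      exact Finset.prod_le_prod (fun σ _ => norm_nonneg _) (fun σ _ => harch σ)
    calc Py ≤ _ := h1
      _ = (t:ℝ) ^ D * PC * (PA ^ β * Pmin ^ γ) := by
          rw [Finset.prod_mul_distrib, Finset.prod_mul_distrib, Finset.prod_mul_distrib,
            Finset.prod_const, Finset.card_univ, hcard, Finset.prod_pow, Finset.prod_pow]
  set Px : ℝ := ∏ σ : K →+* ℂ, ‖σ x‖ with hPxdef
  have hPxsplit : Px = PA * Pmin := by
    rw [hPxdef, hPAdef, hPmindef, ← Finset.prod_mul_distrib]
    apply Finset.prod_congr rfl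
    intro σ _
    rcases le_total (‖σ x‖) 1 with h | h
    · rw [max_eq_left h, min_eq_right h, one_mul]
    · rw [max_eq_right h, min_eq_left h, mul_one]
  -- finite-place membership: y / x^s ∈ C for β ≤ s ≤ γ
  set T₁ : FractionalIdeal (𝓞 K)⁰ K := spanFinset (𝓞 K) (Finset.Iic γ) (fun k => x⁻¹ ^ k)
    with hT₁def
  set T₂ : FractionalIdeal (𝓞 K)⁰ K :=
    spanFinset (𝓞 K) (Finset.Iic p.natDegree) (fun k => x ^ k) with hT₂def
  have hCmem : ∀ i ∈ p.support, p.coeff i ∈ (C : Submodule (𝓞 K) K) := by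
    intro i hi
    have := mem_spanFinset_univ (fun j : Fin (p.natDegree + 1) => p.coeff j)
      ⟨i, Nat.lt_succ_of_le (hdegp i hi)⟩
    rw [hCdef]
    exact FractionalIdeal.mem_coe.mpr (by simpa using this)
  have hkey : ∀ s : ℕ, β ≤ s → s ≤ γ → y * (x ^ s)⁻¹ ∈ C := by
    intro s hs1 hs2
    have h1 : y * (x ^ s)⁻¹ ∈ C * T₁ := by
      rw [← FractionalIdeal.mem_coe, FractionalIdeal.coe_mul]
      have hz : y * (x ^ s)⁻¹ = ∑ i ∈ q.support, p.coeff i * x⁻¹ ^ (s - i) := by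
        rw [hyq, Finset.sum_mul]
        apply Finset.sum_congr rfl
        intro i hi
        rw [mul_assoc, pow_mul_pow_inv hx0 (le_trans (hq i hi) hs1)]
      rw [hz]
      apply Submodule.sum_mem
      intro i hi
      apply Submodule.mul_mem_mul (hCmem i (hsubq hi))
      rw [hT₁def]
      apply FractionalIdeal.mem_coe.mpr
      rw [← FractionalIdeal.mem_coe, spanFinset_coe]
      exact Submodule.subset_span ⟨s - i, by
        simp only [Finset.coe_Iic, Set.mem_Iic]; omega, rfl⟩
    have h2 : y * (x ^ s)⁻¹ ∈ C * T₂ := by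
      rw [← FractionalIdeal.mem_coe, FractionalIdeal.coe_mul]
      have hz : y * (x ^ s)⁻¹ = -∑ j ∈ r.support, p.coeff j * x ^ (j - s) := by
        have : y = -∑ j ∈ r.support, p.coeff j * x ^ j := by
          rw [← hyrsum]; ring
        rw [this, neg_mul, Finset.sum_mul, neg_inj]
        apply Finset.sum_congr rfl
        intro j hj
        have hsj : s ≤ j := le_trans hs2 (hr j hj)
        rw [mul_assoc, pow_sub₀ x hx0 hsj]
        try rw [div_eq_mul_inv]
      rw [hz]
      apply Submodule.neg_mem
      apply Submodule.sum_mem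
      intro j hj
      apply Submodule.mul_mem_mul (hCmem j (hsubr hj))
      rw [hT₂def]
      apply FractionalIdeal.mem_coe.mpr
      rw [← FractionalIdeal.mem_coe, spanFinset_coe]
      exact Submodule.subset_span ⟨j - s, by
        have := hdegp j (hsubr hj)
        simp only [Finset.coe_Iic, Set.mem_Iic]; omega, rfl⟩
    refine mem_of_mem_mul_int hCne h1 h2 ?_
    intro w hw1 hw2
    refine mem_one_of_mem_spans hx0 (c := γ) (d := p.natDegree) ?_ ?_
    · have := FractionalIdeal.mem_coe.mpr hw1
      rw [hT₁def, spanFinset_coe, Finset.coe_Iic] at this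
      exact this
    · have := FractionalIdeal.mem_coe.mpr hw2
      rw [hT₂def, spanFinset_coe, Finset.coe_Iic] at this
      exact this
  -- fractional ideal inclusion
  set m := γ - β with hmdef
  have hincl : spanSingleton (𝓞 K)⁰ (y * (x ^ γ)⁻¹) * A ^ m ≤ C := by
    intro z hz
    have hz' : z ∈ (Submodule.span (𝓞 K) {y * (x ^ γ)⁻¹} *
        Submodule.span (𝓞 K) ((fun k : ℕ => x ^ k) '' Set.Iic m) : Submodule (𝓞 K) K) := by
      have hcoe : ((spanSingleton (𝓞 K)⁰ (y * (x ^ γ)⁻¹) * A ^ m :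
          FractionalIdeal (𝓞 K)⁰ K) : Submodule (𝓞 K) K)
          = Submodule.span (𝓞 K) {y * (x ^ γ)⁻¹} *
            Submodule.span (𝓞 K) ((fun k : ℕ => x ^ k) '' Set.Iic m) := by
        rw [FractionalIdeal.coe_mul, FractionalIdeal.coe_spanSingleton,
          FractionalIdeal.coe_pow, hAdef, spanFinset_coe, ← pow_span_pair]
        congr 2
        simp only [Finset.coe_univ, Set.image_univ, Matrix.range_cons, Matrix.range_empty,
          Set.union_empty, Set.union_singleton]
        try rw [Set.pair_comm]
      rw [← hcoe]
      exact hz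
    rw [Submodule.span_mul_span, Set.singleton_mul] at hz'
    refine FractionalIdeal.mem_coe.mp ?_
    revert hz'
    refine fun hz' => Submodule.span_le.mpr ?_ hz'
    rintro w ⟨w', ⟨k, hk, rfl⟩, rfl⟩
    simp only [Set.mem_Iic] at hk
    have heq : y * (x ^ γ)⁻¹ * x ^ k = y * (x ^ (γ - k))⁻¹ := by
      rw [mul_assoc]
      congr 1
      rw [mul_comm, pow_mul_pow_inv hx0 (by omega : k ≤ γ), inv_pow]
    simp only [SetLike.mem_coe]
    rw [heq]
    exact FractionalIdeal.mem_coe.mpr (hkey (γ - k) (by omega) (by omega))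
  -- norm inequality
  have hwne : y * (x ^ γ)⁻¹ ≠ 0 := mul_ne_zero hy0 (inv_ne_zero (pow_ne_zero _ hx0))
  have hJne : spanSingleton (𝓞 K)⁰ (y * (x ^ γ)⁻¹) * A ^ m ≠ 0 :=
    mul_ne_zero (spanSingleton_ne_zero_iff.mpr hwne) (pow_ne_zero _ hAne)
  have hnorm := absNorm_anti hJne hincl
  rw [_root_.map_mul, _root_.map_pow, absNorm_span_singleton] at hnorm
  -- |Norm (y (x^γ)⁻¹)| * |Norm x|^γ = |Norm y|
  have hnormsplit : |Algebra.norm ℚ (y * (x ^ γ)⁻¹)| * |Algebra.norm ℚ x| ^ γ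
      = |Algebra.norm ℚ y| := by
    rw [← abs_pow, ← _root_.map_pow, ← abs_mul, ← _root_.map_mul]
    congr 2
    field_simp
  have hQ : absNorm C * |Algebra.norm ℚ x| ^ γ
      ≤ |Algebra.norm ℚ y| * absNorm A ^ m := by
    calc absNorm C * |Algebra.norm ℚ x| ^ γ
        ≤ |Algebra.norm ℚ (y * (x ^ γ)⁻¹)| * absNorm A ^ m * |Algebra.norm ℚ x| ^ γ :=
          mul_le_mul_of_nonneg_right hnorm (by positivity)
      _ = |Algebra.norm ℚ y| * absNorm A ^ m := by
          rw [mul_right_comm, hnormsplit]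
  -- cast to ℝ and combine
  have hPx : Px = ((|Algebra.norm ℚ x| : ℚ) : ℝ) := by
    rw [hPxdef, prod_abs_emb, Rat.cast_abs]
  have hPy : Py = ((|Algebra.norm ℚ y| : ℚ) : ℝ) := by
    rw [hPydef, prod_abs_emb, Rat.cast_abs]
  have hQr : NCr * Px ^ γ ≤ Py * NAr ^ m := by
    rw [hPx, hPy, hNCrdef, hNArdef]
    exact_mod_cast hQ
  have hchain : NCr * PA ^ γ * Pmin ^ γ ≤ ((t:ℝ) ^ D * PC * NAr ^ m * PA ^ β) * Pmin ^ γ := by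
    calc NCr * PA ^ γ * Pmin ^ γ = NCr * Px ^ γ := by rw [hPxsplit, mul_pow]; ring
      _ ≤ Py * NAr ^ m := hQr
      _ ≤ ((t:ℝ) ^ D * PC * (PA ^ β * Pmin ^ γ)) * NAr ^ m :=
          mul_le_mul_of_nonneg_right hPyle (by positivity)
      _ = ((t:ℝ) ^ D * PC * NAr ^ m * PA ^ β) * Pmin ^ γ := by ring
  have hchain2 : NCr * PA ^ γ ≤ (t:ℝ) ^ D * PC * NAr ^ m * PA ^ β :=
    le_of_mul_le_mul_right hchain (by positivity)
  have hpowsplit : PA ^ γ = PA ^ β * PA ^ m := by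
    rw [← pow_add]
    congr 1
    omega
  have hchain3 : NCr * PA ^ m * PA ^ β ≤ ((t:ℝ) ^ D * PC * NAr ^ m) * PA ^ β := by
    calc NCr * PA ^ m * PA ^ β = NCr * PA ^ γ := by rw [hpowsplit]; ring
      _ ≤ (t:ℝ) ^ D * PC * NAr ^ m * PA ^ β := hchain2
  have hchain4 : NCr * PA ^ m ≤ (t:ℝ) ^ D * PC * NAr ^ m :=
    le_of_mul_le_mul_right hchain3 (by positivity)
  -- final: QA^m ≤ t^D * QC
  have hfinal : (PA / NAr) ^ m ≤ (t:ℝ) ^ D * (PC / NCr) := by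
    rw [div_pow, mul_div_assoc', div_le_div_iff₀ (by positivity) hNCr0]
    calc PA ^ m * NCr = NCr * PA ^ m := by ring
      _ ≤ (t:ℝ) ^ D * PC * NAr ^ m := hchain4
  -- take logarithms
  have ht0 : (0:ℝ) < t := by exact_mod_cast ht
  have hlog1 : (m:ℝ) * Real.log (PA / NAr) ≤ D * Real.log t + Real.log (PC / NCr) := by
    have h1 := Real.log_le_log (by positivity) hfinal
    rw [Real.log_pow, Real.log_mul (by positivity) (ne_of_gt hQC0), Real.log_pow] at h1
    exact h1
  have hDigne : ((D:ℝ))⁻¹ * D = 1 := by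
    field_simp
  have hlogelem : Real.log (elemHeight K x) = (D:ℝ)⁻¹ * Real.log (PA / NAr) := by
    rw [helem, Real.log_rpow hQA0]
  have hlogpoly : Real.log (polyHeight K p) = (D:ℝ)⁻¹ * Real.log (PC / NCr) := by
    rw [hpoly, Real.log_rpow hQC0]
  have hmain : (m:ℝ) * Real.log (elemHeight K x) ≤ Real.log ((t:ℝ) * polyHeight K p) := by
    rw [Real.log_mul (ne_of_gt ht0) (by linarith : polyHeight K p ≠ 0), hlogelem, hlogpoly]
    have h2 : (m:ℝ) * ((D:ℝ)⁻¹ * Real.log (PA / NAr))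
        ≤ (D:ℝ)⁻¹ * ((D:ℝ) * Real.log t + Real.log (PC / NCr)) := by
      rw [mul_left_comm]
      exact mul_le_mul_of_nonneg_left hlog1 (by positivity)
    calc (m:ℝ) * ((D:ℝ)⁻¹ * Real.log (PA / NAr)) ≤ _ := h2
      _ = Real.log t + (D:ℝ)⁻¹ * Real.log (PC / NCr) := by
          rw [mul_add, ← mul_assoc, hDigne, one_mul]
  have hdiv : (m:ℝ) ≤ Real.log ((t:ℝ) * polyHeight K p) / Real.log (elemHeight K x) :=
    (le_div_iff₀ hlogHx).mpr hmain
  have hmeq : (m:ℝ) = (γ:ℝ) - (β:ℝ) := by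
    rw [hmdef]
    push_cast [Nat.cast_sub hβγ.le]
    ring
  rw [hmeq] at hdiv
  linarith
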